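/- Suppose ξ is a curve in ℝ²₄ whose Frenet curvatures κ and k are constant and whose third curvature ρ = r - ε_t ε_T ε_N κ is zero (a w-curve with vanishing third curvature, as in the example). Then for the involute φ with T_φ = ε_N N, the vector field N_φ := T_φ'/‖T_φ'‖ = (-ε_t κ T + ε_n ε_N k B)/√|ε_n ε_T k² + ε_T κ²| has constant coefficients, and its derivative N_φ' is proportional to N; hence N_φ' is proportional to T_φ, meaning the second curvature k* of the involute vanishes. -/

import Mathlib

/-- For a w-curve `ξ` in `ℝ²₄` (constant curvatures `κ`, `k`, third curvature
`ρ ≡ 0`), the normal `N_φ = (-ε_t κ T + ε_n ε_N k B)/√|ε_n ε_T k² + ε_T κ²|`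
of the involute has constant coefficients, and its derivative is proportional
to `N`, hence to `T_φ = ε_N N`; so the second curvature of the involute
vanishes. -/
theorem stmt13 (T N B E : ℝ → Fin 4 → ℝ) (κ k : ℝ → ℝ) (κ₀ k₀ : ℝ)
    (εT εN εt εn εb : ℝ)
    (hεT : εT = 1 ∨ εT = -1) (hεN : εN = 1 ∨ εN = -1)
    (hεt : εt = 1 ∨ εt = -1) (hεn : εn = 1 ∨ εn = -1) (hεb : εb = 1 ∨ εb = -1)
    (hκ : ∀ s, κ s = κ₀) (hk : ∀ s, k s = k₀)
    (hTdiff : Differentiable ℝ T) (hBdiff : Differentiable ℝ B)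
    (hT' : ∀ s, deriv T s = (εN * κ s) • N s)
    (hN' : ∀ s, deriv N s = (-(εt * εN * κ s)) • T s + (εn * k s) • B s)
    (hB' : ∀ s, deriv B s = (-(εt * k s)) • N s)
    (hE' : ∀ s, deriv E s = 0) :
    (∀ s, deriv (fun t =>
        (Real.sqrt |εn * εT * k₀ ^ 2 + εT * κ₀ ^ 2|)⁻¹ •
          ((-(εt * κ₀)) • T t + (εn * εN * k₀) • B t)) s
      = ((Real.sqrt |εn * εT * k₀ ^ 2 + εT * κ₀ ^ 2|)⁻¹ *
          (-(εt * εN * κ₀ ^ 2) - εt * εn * εN * k₀ ^ 2)) • N s) ∧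
    (∀ s, ∃ μ : ℝ, deriv (fun t =>
        (Real.sqrt |εn * εT * k₀ ^ 2 + εT * κ₀ ^ 2|)⁻¹ •
          ((-(εt * κ₀)) • T t + (εn * εN * k₀) • B t)) s
      = μ • (εN • N s)) := by

  set c := (Real.sqrt |εn * εT * k₀ ^ 2 + εT * κ₀ ^ 2|)⁻¹ with hc
  have hmain : ∀ s, deriv (fun t =>
      c • ((-(εt * κ₀)) • T t + (εn * εN * k₀) • B t)) s
      = (c * (-(εt * εN * κ₀ ^ 2) - εt * εn * εN * k₀ ^ 2)) • N s := by
    intro s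
    have hdT : DifferentiableAt ℝ (fun t => (-(εt * κ₀)) • T t) s :=
      (hTdiff s).const_smul (-(εt * κ₀))
    have hdB : DifferentiableAt ℝ (fun t => (εn * εN * k₀) • B t) s :=
      (hBdiff s).const_smul (εn * εN * k₀)
    rw [deriv_fun_const_smul _ (hdT.fun_add hdB), deriv_fun_add hdT hdB,
      deriv_fun_const_smul _ (hTdiff s), deriv_fun_const_smul _ (hBdiff s),
      hT' s, hB' s, hκ s, hk s]
    module
  refine ⟨hmain, fun s => ?_⟩
  refine ⟨εN * (c * (-(εt * εN * κ₀ ^ 2) - εt * εn * εN * k₀ ^ 2)), ?_⟩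
  rw [hmain s, smul_smul]
  congr 1
  rcases hεN with h | h <;> rw [h] <;> ring
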